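/- Suppose ρ satisfies detailed balance for W. Define c(u) := ∑_x ρ(x) V(x) (e^{uL} Q)(x). Then for every u ≥ 0 the function c is differentiable at u with some derivative c′(u), and ∑_x ρ(x) (L′ (e^{uL} Q))(x) = −(a + b)·c′(u). (Under time-reversal symmetry the two terms of the stationary response formula coincide, recovering the equilibrium fluctuation-dissipation theorem R(t,s) = β ∂_s⟨V(x_s)Q(x_t)⟩_eq when a + b = β.) -/

import Mathlib

/-- The generator matrix of the Markov jump process with rates `W`:
entry `W x y` at `(x, y)` for `x ≠ y` and `-∑_{y ≠ x} W x y` on the diagonal. -/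
noncomputable def genMatrix {K : Type*} [Fintype K] [DecidableEq K] (W : K → K → ℝ) :
    Matrix K K ℝ :=
  Matrix.of fun x y =>
    if x = y then -∑ z ∈ Finset.univ.filter (fun z => z ≠ x), W x z else W x y

/-- The semigroup `e^{tL}` (matrix exponential of `t • L`). -/
noncomputable def expL {K : Type*} [Fintype K] [DecidableEq K] (W : K → K → ℝ) (t : ℝ) :
    Matrix K K ℝ :=
  NormedSpace.exp (t • genMatrix W)

/-- Action of `e^{tL}` on observables: `(e^{tL} f)(x) = ∑ y, (e^{tL})_{x,y} f y`. -/
noncomputable def actE {K : Type*} [Fintype K] [DecidableEq K] (W : K → K → ℝ) (t : ℝ)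
    (f : K → ℝ) : K → ℝ :=
  fun x => ∑ y, expL W t x y * f y

/-- Action of `e^{tL}` on distributions: `(μ e^{tL})(x) = ∑ z, μ z (e^{tL})_{z,x}`. -/
noncomputable def muE {K : Type*} [Fintype K] [DecidableEq K] (W : K → K → ℝ) (μ : K → ℝ)
    (t : ℝ) : K → ℝ :=
  fun x => ∑ z, μ z * expL W t z x

/-- The backward generator acting on observables. -/
noncomputable def genL {K : Type*} [Fintype K] (W : K → K → ℝ) (f : K → ℝ) : K → ℝ :=
  fun x => ∑ y, W x y * (f y - f x)

/-- The linearized perturbation operator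
`(L' f)(x) = ∑ y, W x y * (b V y - a V x) * (f y - f x)`. -/
noncomputable def genL' {K : Type*} [Fintype K] (W : K → K → ℝ) (V : K → ℝ) (a b : ℝ)
    (f : K → ℝ) : K → ℝ :=
  fun x => ∑ y, W x y * (b * V y - a * V x) * (f y - f x)

/-- The perturbed rates `W_h x y = W x y * exp (h (b V y - a V x))`. -/
noncomputable def pertW {K : Type*} (W : K → K → ℝ) (V : K → ℝ) (a b h : ℝ) :
    K → K → ℝ :=
  fun x y => W x y * Real.exp (h * (b * V y - a * V x))


section Aux

variable {K : Type*} [Fintype K] [DecidableEq K]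

lemma genMatrix_mulVec (W : K → K → ℝ) (f : K → ℝ) (x : K) :
    ∑ y, genMatrix W x y * f y = genL W f x := by
  classical
  have h1 : ∑ y, genMatrix W x y * f y
      = genMatrix W x x * f x + ∑ y ∈ Finset.univ.erase x, genMatrix W x y * f y :=
    (Finset.add_sum_erase _ _ (Finset.mem_univ x)).symm
  have h2 : ∀ y ∈ Finset.univ.erase x, genMatrix W x y * f y = W x y * f y := by
    intro y hy
    have hyx : x ≠ y := (Finset.ne_of_mem_erase hy).symm
    simp [genMatrix, hyx]
  have hdiag : genMatrix W x x = -∑ z ∈ Finset.univ.erase x, W x z := by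
    simp [genMatrix, Finset.filter_ne']
  have h3 : genL W f x
      = W x x * (f x - f x) + ∑ y ∈ Finset.univ.erase x, W x y * (f y - f x) :=
    (Finset.add_sum_erase _ _ (Finset.mem_univ x)).symm
  rw [h1, Finset.sum_congr rfl h2, hdiag, h3]
  simp only [mul_sub]
  rw [Finset.sum_sub_distrib, ← Finset.sum_mul]
  ring

lemma hasDerivAt_actE (W : K → K → ℝ) (Q : K → ℝ) (u : ℝ) (x : K) :
    HasDerivAt (fun v => actE W v Q x) (genL W (actE W u Q) x) u := by
  classical
  letI : SeminormedRing (Matrix K K ℝ) := Matrix.linftyOpSemiNormedRing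
  letI : NormedRing (Matrix K K ℝ) := Matrix.linftyOpNormedRing
  letI : NormedAlgebra ℝ (Matrix K K ℝ) := Matrix.linftyOpNormedAlgebra
  have hexp : HasDerivAt (fun v : ℝ => NormedSpace.exp (v • genMatrix W))
      (genMatrix W * NormedSpace.exp (u • genMatrix W)) u :=
    hasDerivAt_exp_smul_const' (genMatrix W) u
  have hentry : ∀ y : K, HasDerivAt (fun v => expL W v x y)
      ((genMatrix W * expL W u) x y) u := by
    intro y
    have lm : Matrix K K ℝ →ₗ[ℝ] ℝ :=
      { toFun := fun M => M x y, map_add' := fun _ _ => rfl, map_smul' := fun _ _ => rfl }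
    let e : Matrix K K ℝ →L[ℝ] ℝ := LinearMap.toContinuousLinearMap
      { toFun := fun M => M x y, map_add' := fun _ _ => rfl, map_smul' := fun _ _ => rfl }
    have := (e.hasFDerivAt.comp_hasDerivAt u hexp)
    exact this
  have hsum : HasDerivAt (fun v => ∑ y, expL W v x y * Q y)
      (∑ y, (genMatrix W * expL W u) x y * Q y) u :=
    HasDerivAt.fun_sum fun y _ => (hentry y).mul_const (Q y)
  have hval : ∑ y, (genMatrix W * expL W u) x y * Q y = genL W (actE W u Q) x := by
    have : ∑ y, (genMatrix W * expL W u) x y * Q y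
        = ∑ z, genMatrix W x z * actE W u Q z := by
      simp only [Matrix.mul_apply, Finset.sum_mul, actE, Finset.mul_sum]
      rw [Finset.sum_comm]
      apply Finset.sum_congr rfl; intro z _
      apply Finset.sum_congr rfl; intro y _
      ring
    rw [this, genMatrix_mulVec]
  rw [← hval]
  exact hsum

lemma swap_sum (W : K → K → ℝ) (ρ : K → ℝ)
    (hdb : ∀ x y : K, ρ x * W x y = ρ y * W y x) (g : K → K → ℝ) :
    ∑ x, ∑ y, ρ x * W x y * g x y = ∑ x, ∑ y, ρ x * W x y * g y x := by
  rw [Finset.sum_comm]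
  apply Finset.sum_congr rfl; intro x _
  apply Finset.sum_congr rfl; intro y _
  rw [hdb y x]

end Aux

/-- equilibrium fluctuation-dissipation theorem: if `ρ` satisfies
detailed balance for `W` and `c u = ∑ x, ρ x * V x * (e^{uL} Q) x`, then for every
`u ≥ 0` the derivative `c' u` exists and
`∑ x, ρ x * (L' (e^{uL} Q)) x = -(a + b) * c'(u)`. -/
theorem equilibrium_fluctuation_dissipation
    {K : Type*} [Fintype K] [Nonempty K] [DecidableEq K]
    (W : K → K → ℝ) (hW : ∀ x y : K, x ≠ y → 0 ≤ W x y)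
    (ρ : K → ℝ) (hρ0 : ∀ x, 0 ≤ ρ x) (hρ1 : ∑ x, ρ x = 1)
    (hdb : ∀ x y : K, ρ x * W x y = ρ y * W y x)
    (V Q : K → ℝ) (a b : ℝ) (u : ℝ) (hu : 0 ≤ u) :
    ∃ c' : ℝ,
      HasDerivAt (fun v => ∑ x, ρ x * V x * actE W v Q x) c' u ∧
      ∑ x, ρ x * genL' W V a b (actE W u Q) x = -(a + b) * c' := by
  classical
  set f := actE W u Q with hf
  refine ⟨∑ x, ρ x * V x * genL W f x, ?_, ?_⟩
  · exact HasDerivAt.fun_sum fun x _ => (hasDerivAt_actE W Q u x).const_mul (ρ x * V x)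
  · -- algebraic identity via detailed balance
    have key : ∑ x, ∑ y, ρ x * W x y * ((b * V y - a * V x) * (f y - f x))
        = -(a + b) * ∑ x, ∑ y, ρ x * W x y * (V x * (f y - f x)) := by
      have hanti : ∑ x, ∑ y, ρ x * W x y *
          (((b * V y - a * V x) * (f y - f x)) + (a + b) * (V x * (f y - f x))) = 0 := by
        have h1 := swap_sum W ρ hdb
          (fun x y => ((b * V y - a * V x) * (f y - f x)) + (a + b) * (V x * (f y - f x)))
        have h2 : ∑ x, ∑ y, ρ x * W x y *
            (((b * V x - a * V y) * (f x - f y)) + (a + b) * (V y * (f x - f y)))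
            = -∑ x, ∑ y, ρ x * W x y *
            (((b * V y - a * V x) * (f y - f x)) + (a + b) * (V x * (f y - f x))) := by
          rw [← Finset.sum_neg_distrib]
          apply Finset.sum_congr rfl; intro x _
          rw [← Finset.sum_neg_distrib]
          apply Finset.sum_congr rfl; intro y _
          ring
        rw [h2] at h1
        linarith
      have expand : ∑ x, ∑ y, ρ x * W x y *
          (((b * V y - a * V x) * (f y - f x)) + (a + b) * (V x * (f y - f x)))
          = ∑ x, ∑ y, ρ x * W x y * ((b * V y - a * V x) * (f y - f x))
            + (a + b) * ∑ x, ∑ y, ρ x * W x y * (V x * (f y - f x)) := by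
        rw [Finset.mul_sum, ← Finset.sum_add_distrib]
        apply Finset.sum_congr rfl; intro x _
        rw [Finset.mul_sum, ← Finset.sum_add_distrib]
        apply Finset.sum_congr rfl; intro y _
        ring
      rw [expand] at hanti
      linarith
    have lhs_eq : ∑ x, ρ x * genL' W V a b f x
        = ∑ x, ∑ y, ρ x * W x y * ((b * V y - a * V x) * (f y - f x)) := by
      apply Finset.sum_congr rfl; intro x _
      rw [genL', Finset.mul_sum]
      apply Finset.sum_congr rfl; intro y _
      ring
    have rhs_eq : ∑ x, ρ x * V x * genL W f x
        = ∑ x, ∑ y, ρ x * W x y * (V x * (f y - f x)) := by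
      apply Finset.sum_congr rfl; intro x _
      rw [genL, Finset.mul_sum]
      apply Finset.sum_congr rfl; intro y _
      ring
    rw [lhs_eq, rhs_eq, key]
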